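/- Every locally finite group admits a weakly finite presentation; more precisely, if G is locally finite then any presentation ⟨A ∥ R⟩ of G with R the full kernel of F(A) → G is weakly finite. -/

import Mathlib

open Subgroup

/-- The natural quotient map `F(A) → ⟨A ∥ R⟩` of a presentation. -/
def presMk {α : Type} (R : Set (FreeGroup α)) :
    FreeGroup α →* FreeGroup α ⧸ Subgroup.normalClosure R :=
  QuotientGroup.mk' (Subgroup.normalClosure R)

/-- A presentation `⟨A ∥ R⟩` is weakly finite if for every finite set `S` of words in
`A^{±1}` there are a finite subalphabet `A₀ ⊆ A` and a finite set `R₀` of relators from `R`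
written in `A₀^{±1}`, such that every word of `S` is an `A₀`-word and the natural
homomorphism `⟨A₀ ∥ R₀⟩ → ⟨A ∥ R⟩` restricts to an isomorphism (i.e. is injective) on the
subgroup generated by the images of the words of `S`. -/
def IsWeaklyFinite {α : Type} (R : Set (FreeGroup α)) : Prop :=
  ∀ S : Finset (FreeGroup α),
    ∃ (A₀ : Finset α) (R₀ S₀ : Finset (FreeGroup {a : α // a ∈ A₀})),
      (FreeGroup.map (Subtype.val) '' (R₀ : Set (FreeGroup {a : α // a ∈ A₀})) ⊆ R) ∧
      (FreeGroup.map (Subtype.val) '' (S₀ : Set (FreeGroup {a : α // a ∈ A₀}))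
         = (S : Set (FreeGroup α))) ∧
      ∃ h : (FreeGroup {a : α // a ∈ A₀} ⧸
              Subgroup.normalClosure (R₀ : Set (FreeGroup {a : α // a ∈ A₀}))) →*
            (FreeGroup α ⧸ Subgroup.normalClosure R),
        (∀ w : FreeGroup {a : α // a ∈ A₀},
           h (presMk (R₀ : Set (FreeGroup {a : α // a ∈ A₀})) w)
             = presMk R (FreeGroup.map Subtype.val w)) ∧
        Set.InjOn h
          (closure (presMk (R₀ : Set (FreeGroup {a : α // a ∈ A₀})) ''
            (S₀ : Set (FreeGroup {a : α // a ∈ A₀}))) : Set _)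


/-- A group is locally finite if every finitely generated subgroup is finite. -/
def LocallyFiniteGroup (G : Type) [Group G] : Prop :=
  ∀ H : Subgroup G, H.FG → Finite H

/-- Words whose letters all lie in `A₀` come from the free group on `A₀`. -/
lemma mem_range_freeGroupMap {α : Type} (A₀ : Finset α) (L : List (α × Bool))
    (hL : ∀ p ∈ L, p.1 ∈ A₀) :
    FreeGroup.mk L ∈ (FreeGroup.map (Subtype.val : {a : α // a ∈ A₀} → α)).range := by
  induction L with
  | nil =>
    have : FreeGroup.mk ([] : List (α × Bool)) = 1 := rfl
    rw [this]
    exact one_mem _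
  | cons p L ih =>
    rw [← List.singleton_append, ← FreeGroup.mul_mk]
    refine mul_mem ?_ (ih fun q hq => hL q (List.mem_cons_of_mem _ hq))
    have ha : p.1 ∈ A₀ := hL p List.mem_cons_self
    rcases p with ⟨a, b⟩
    cases b
    · refine ⟨(FreeGroup.of ⟨a, ha⟩)⁻¹, ?_⟩
      rw [map_inv, FreeGroup.map.of]
      rfl
    · exact ⟨FreeGroup.of ⟨a, ha⟩, FreeGroup.map.of⟩

/-- The free group on a finite type is finitely generated. -/
lemma freeGroup_fg {β : Type} [Finite β] : Group.FG (FreeGroup β) :=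
  Group.fg_iff.2 ⟨Set.range FreeGroup.of, FreeGroup.closure_range_of β,
    Set.finite_range _⟩

/-- If `G` is a locally finite group and `π : F(A) → G` is a surjection, then the
presentation of `G` with generators `A` and relators the full kernel of `π` is weakly
finite. -/
theorem weaklyFinite_of_locallyFinite {α : Type} (G : Type) [Group G]
    (π : FreeGroup α →* G) (hπ : Function.Surjective π)
    (hG : LocallyFiniteGroup G) :
    IsWeaklyFinite (π.ker : Set (FreeGroup α)) := by
  classical
  intro S
  -- the finite subalphabet: all letters occurring in words of `S`
  set A₀ : Finset α := S.biUnion (fun s => (s.toWord.map Prod.fst).toFinset) with hA₀def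
  set emb : FreeGroup {a : α // a ∈ A₀} →* FreeGroup α :=
    FreeGroup.map Subtype.val with hembdef
  -- every word of `S` lies in the range of `emb`
  have hSrange : ∀ s ∈ S, s ∈ emb.range := by
    intro s hs
    have : FreeGroup.mk s.toWord ∈ emb.range := by
      apply mem_range_freeGroupMap
      intro p hp
      simp only [hA₀def, Finset.mem_biUnion]
      exact ⟨s, hs, by simpa using List.mem_map_of_mem (f := Prod.fst) hp⟩
    rwa [FreeGroup.mk_toWord] at this
  -- choose preimages
  set f : FreeGroup α → FreeGroup {a : α // a ∈ A₀} := fun s =>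
    if h : ∃ w, emb w = s then h.choose else 1 with hfdef
  have hf : ∀ s ∈ S, emb (f s) = s := by
    intro s hs
    obtain ⟨w, hw⟩ := hSrange s hs
    simp only [hfdef]
    rw [dif_pos ⟨w, hw⟩]
    exact (⟨w, hw⟩ : ∃ w, emb w = s).choose_spec
  set S₀ : Finset (FreeGroup {a : α // a ∈ A₀}) := S.image f with hS₀def
  -- the composite map to `G`
  set φ : FreeGroup {a : α // a ∈ A₀} →* G := π.comp emb with hφdef
  haveI : Finite {a : α // a ∈ A₀} := inferInstance
  haveI : Group.FG (FreeGroup {a : α // a ∈ A₀}) := freeGroup_fg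
  -- the range of φ is finite, so the kernel has finite index, so it is f.g.
  have hrangeFG : (φ.range).FG := (Group.fg_iff_subgroup_fg _).1 (Group.fg_range φ)
  haveI hfin : Finite φ.range := hG _ hrangeFG
  haveI : φ.ker.FiniteIndex := by
    constructor
    rw [Subgroup.index_ker]
    exact Nat.card_ne_zero.2 ⟨⟨1, one_mem _⟩, hfin⟩
  have hkerFG : (φ.ker).FG :=
    (Group.fg_iff_subgroup_fg _).1 (Subgroup.fg_of_index_ne_zero _)
  obtain ⟨R₀, hR₀⟩ := hkerFG
  -- the normal closure of R₀ is exactly ker φ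
  have hnc : Subgroup.normalClosure (R₀ : Set (FreeGroup {a : α // a ∈ A₀})) = φ.ker := by
    apply le_antisymm
    · exact Subgroup.normalClosure_le_normal (by rw [← hR₀]; exact Subgroup.subset_closure)
    · rw [← hR₀]; exact Subgroup.closure_le_normalClosure
  have hncπ : Subgroup.normalClosure (π.ker : Set (FreeGroup α)) = π.ker :=
    Subgroup.normalClosure_eq_self _
  refine ⟨A₀, R₀, S₀, ?_, ?_, ?_⟩
  · -- relators are relators
    rintro x ⟨r, hr, rfl⟩
    have : r ∈ φ.ker := by rw [← hR₀]; exact Subgroup.subset_closure hr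
    exact this
  · -- images of S₀ are exactly S
    ext s
    constructor
    · rintro ⟨w, hw, rfl⟩
      simp only [hS₀def, Finset.coe_image, Set.mem_image, Finset.mem_coe] at hw
      obtain ⟨t, ht, rfl⟩ := hw
      exact (show emb (f t) ∈ S by rw [hf t ht]; exact ht)
    · intro hs
      exact ⟨f s, by simp only [hS₀def, Finset.coe_image]; exact ⟨s, hs, rfl⟩, hf s hs⟩
  · -- the comparison homomorphism
    have hle : Subgroup.normalClosure (R₀ : Set (FreeGroup {a : α // a ∈ A₀})) ≤
        ((presMk (π.ker : Set (FreeGroup α))).comp emb).ker := by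
      rw [hnc]
      intro x hx
      have : emb x ∈ π.ker := hx
      simp only [MonoidHom.mem_ker, MonoidHom.comp_apply, presMk]
      rw [QuotientGroup.mk'_apply, QuotientGroup.eq_one_iff]
      rw [hncπ]
      exact this
    refine ⟨QuotientGroup.lift _ _ hle, fun w => rfl, ?_⟩
    have hinj : Function.Injective (QuotientGroup.lift _ _ hle) := by
      rw [injective_iff_map_eq_one]
      intro x hx
      obtain ⟨w, rfl⟩ := QuotientGroup.mk'_surjective _ x
      have : presMk (π.ker : Set (FreeGroup α)) (emb w) = 1 := hx
      rw [presMk, QuotientGroup.mk'_apply, QuotientGroup.eq_one_iff, hncπ] at this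
      rw [QuotientGroup.mk'_apply, QuotientGroup.eq_one_iff, hnc]
      exact this
    exact hinj.injOn
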